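/- Let V be a finite-dimensional vector space, M, N commuting endomorphisms of V, and λ, μ elements of the base field K. Then (λ − s)(μ − s) is an eigenvalue of the endomorphism (M − sE)(N − sE) of V ⊗_K K(s) if and only if (E_λ(M) ∩ E_μ(N)) + (E_μ(M) ∩ E_λ(N)) ≠ {0}, where E_ν(T) = ker(T − νE). -/

import Mathlib

open scoped TensorProduct

section Aux
variable {K V : Type*} [Field K] [AddCommGroup V] [Module K V]
-- test: nilpotent pair lemma
variable {K V : Type*} [Field K] [AddCommGroup V] [Module K V]

theorem test_ker_pair (A B : Module.End K V) (hAB : Commute A B) :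
    ∀ (a b : ℕ) (u : V), u ≠ 0 → (A^a) u = 0 → (B^b) u = 0 →
    ∃ u', u' ≠ 0 ∧ A u' = 0 ∧ B u' = 0 := by
  have inner : ∀ (b : ℕ) (u : V), u ≠ 0 → A u = 0 → (B^b) u = 0 →
      ∃ u', u' ≠ 0 ∧ A u' = 0 ∧ B u' = 0 := by
    intro b
    induction b with
    | zero => intro u hu _ h0; simp at h0; exact absurd h0 hu
    | succ b ih =>
      intro u hu hA hB
      by_cases h : (B^b) u = 0
      · exact ih u hu hA h
      · refine ⟨(B^b) u, h, ?_, ?_⟩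
        · have := (hAB.symm.pow_left b).eq
          calc A ((B^b) u) = (A * B^b) u := rfl
          _ = (B^b * A) u := by rw [(hAB.pow_right b).eq]
          _ = (B^b) (A u) := rfl
          _ = 0 := by rw [hA, map_zero]
        · calc B ((B^b) u) = (B^(b+1)) u := by rw [pow_succ']; rfl
          _ = 0 := hB
  intro a
  induction a with
  | zero => intro b u hu h0 _; simp at h0; exact absurd h0 hu
  | succ a ih =>
    intro b u hu hA hB
    by_cases h : (A^a) u = 0
    · exact ih b u hu h hB
    · refine inner b ((A^a) u) h ?_ ?_
      · calc A ((A^a) u) = (A^(a+1)) u := by rw [pow_succ']; rfl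
        _ = 0 := hA
      · calc (B^b) ((A^a) u) = (B^b * A^a) u := rfl
        _ = (A^a * B^b) u := by rw [(hAB.symm.pow_pow b a).eq]
        _ = (A^a) ((B^b) u) := rfl
        _ = 0 := by rw [hB, map_zero]
theorem test_chain (A B : Module.End K V) (hAB : Commute A B) (v : ℕ → V)
    (h0 : A (v 0) = 0) (hs : ∀ k, A (v (k+1)) = B (v k)) (d : ℕ)
    (hd : ∀ k, d < k → v k = 0) (k0 : ℕ) (hk0 : v k0 ≠ 0) :
    ∃ u, u ≠ 0 ∧ A u = 0 ∧ B u = 0 := by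
  have claim1 : ∀ k, (A^(k+1)) (v k) = 0 := by
    intro k
    induction k with
    | zero => simpa using h0
    | succ k ih =>
      calc (A^(k+2)) (v (k+1)) = (A^(k+1)) (A (v (k+1))) := by rw [pow_succ]; rfl
      _ = (A^(k+1)) (B (v k)) := by rw [hs]
      _ = (B) ((A^(k+1)) (v k)) := by
          have := (hAB.pow_left (k+1)).eq
          calc (A^(k+1)) (B (v k)) = (A^(k+1) * B) (v k) := rfl
          _ = (B * A^(k+1)) (v k) := by rw [this]
          _ = B ((A^(k+1)) (v k)) := rfl
      _ = 0 := by rw [ih, map_zero]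
  have claim2 : ∀ t k, (B^t) (v k) = (A^t) (v (k+t)) := by
    intro t
    induction t with
    | zero => simp
    | succ t ih =>
      intro k
      calc (B^(t+1)) (v k) = (B^t) (B (v k)) := by rw [pow_succ]; rfl
      _ = (B^t) (A (v (k+1))) := by rw [hs]
      _ = A ((B^t) (v (k+1))) := by
          calc (B^t) (A (v (k+1))) = (B^t * A) (v (k+1)) := rfl
          _ = (A * B^t) (v (k+1)) := by rw [(hAB.pow_right t).symm.eq]
          _ = A ((B^t) (v (k+1))) := rfl
      _ = A ((A^t) (v (k+1+t))) := by rw [ih]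
      _ = (A^(t+1)) (v (k+(t+1))) := by
          rw [pow_succ']
          have : k+1+t = k+(t+1) := by omega
          rw [this]; rfl
  have hB2 : (B^(d+1)) (v k0) = 0 := by
    rw [claim2, hd _ (by omega), map_zero]
  exact test_ker_pair A B hAB (k0+1) (d+1) (v k0) hk0 (claim1 k0) hB2

 

theorem test_ker_sup (M N : Module.End K V) (hcomm : M * N = N * M) (lam mu : K)
    (u : V) (hu : u ≠ 0)
    (hA : (M * N - (lam * mu) • 1) u = 0) (hB : (M + N - (lam + mu) • 1) u = 0) :
    (LinearMap.ker (M - lam • 1) ⊓ LinearMap.ker (N - mu • 1)) ⊔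
      (LinearMap.ker (M - mu • 1) ⊓ LinearMap.ker (N - lam • 1)) ≠ ⊥ := by
  rw [Submodule.ne_bot_iff]
  have e1 : M (N u) = (lam * mu) • u := by
    have := hA
    simp only [LinearMap.sub_apply, Module.End.mul_apply, LinearMap.smul_apply,
      Module.End.one_apply, sub_eq_zero] at this
    exact this
  have e2 : N u = (lam + mu) • u - M u := by
    have := hB
    simp only [LinearMap.sub_apply, LinearMap.add_apply, LinearMap.smul_apply,
      Module.End.one_apply, sub_eq_zero] at this
    rw [← this]; abel
  have e4 : N (M u) = (lam * mu) • u := by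
    have : (N * M) u = (lam*mu) • u := by rw [← hcomm]; exact e1
    exact this
  have e3 : M (M u) = (lam + mu) • M u - (lam * mu) • u := by
    have h := e1
    rw [e2, map_sub, map_smul] at h
    rw [eq_sub_iff_add_eq, ← h]
    abel
  have kerM : ∀ (c : K) (x : V), M x - c • x = 0 → x ∈ LinearMap.ker (M - c • 1) := by
    intro c x h
    simpa only [LinearMap.mem_ker, LinearMap.sub_apply, LinearMap.smul_apply,
      Module.End.one_apply] using h
  have kerN : ∀ (c : K) (x : V), N x - c • x = 0 → x ∈ LinearMap.ker (N - c • 1) := by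
    intro c x h
    simpa only [LinearMap.mem_ker, LinearMap.sub_apply, LinearMap.smul_apply,
      Module.End.one_apply] using h
  by_cases hlm : lam = mu
  · subst hlm
    by_cases hMu : M u - lam • u = 0
    · refine ⟨u, Submodule.mem_sup_left (Submodule.mem_inf.mpr ⟨kerM _ _ hMu, kerN _ _ ?_⟩), hu⟩
      rw [e2, sub_eq_zero.mp hMu]
      module
    · refine ⟨M u - lam • u, Submodule.mem_sup_left (Submodule.mem_inf.mpr
        ⟨kerM _ _ ?_, kerN _ _ ?_⟩), hMu⟩
      · rw [map_sub, map_smul, e3]; module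
      · rw [map_sub, map_smul, e4, e2]; module
  · refine ⟨(M u - mu • u) + -(M u - lam • u), ?_, ?_⟩
    · refine Submodule.add_mem_sup (Submodule.mem_inf.mpr ⟨kerM _ _ ?_, kerN _ _ ?_⟩)
        (Submodule.neg_mem _ (Submodule.mem_inf.mpr ⟨kerM _ _ ?_, kerN _ _ ?_⟩))
      · rw [map_sub, map_smul, e3]; module
      · rw [map_sub, map_smul, e4, e2]; module
      · rw [map_sub, map_smul, e3]; module
      · rw [map_sub, map_smul, e4, e2]; module
    · have h5 : (M u - mu • u) + -(M u - lam • u) = (lam - mu) • u := by module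
      rw [h5]
      exact smul_ne_zero (sub_ne_zero.mpr hlm) hu

theorem bk_key {F : Type*} [CommRing F] [Algebra K F] (M N : Module.End K V)
    (v : V) (a c : K) (x : F) (hM : M v = a • v) (hN : N v = c • v) :
    ((LinearMap.baseChange F M - x • 1) * (LinearMap.baseChange F N - x • 1))
      ((1 : F) ⊗ₜ[K] v)
    = ((algebraMap K F a - x) * (algebraMap K F c - x)) • ((1 : F) ⊗ₜ[K] v) := by
  have hNt : (LinearMap.baseChange F N) ((1 : F) ⊗ₜ[K] v)
      = (algebraMap K F c) • ((1 : F) ⊗ₜ[K] v) := by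
    rw [LinearMap.baseChange_tmul, hN, TensorProduct.tmul_smul, algebraMap_smul]
  have hMt : (LinearMap.baseChange F M) ((1 : F) ⊗ₜ[K] v)
      = (algebraMap K F a) • ((1 : F) ⊗ₜ[K] v) := by
    rw [LinearMap.baseChange_tmul, hM, TensorProduct.tmul_smul, algebraMap_smul]
  simp only [Module.End.mul_apply, LinearMap.sub_apply, LinearMap.smul_apply,
    Module.End.one_apply, map_sub, map_smul, hNt, hMt]
  module

theorem fwd_key {F : Type*} [CommRing F] [Algebra K F] (M N : Module.End K V)
    (lam mu : K) (x : F) (w : F ⊗[K] V)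
    (hT : ((LinearMap.baseChange F M - x • 1) *
      (LinearMap.baseChange F N - x • 1)) w
      = ((algebraMap K F lam - x) * (algebraMap K F mu - x)) • w) :
    (LinearMap.baseChange F (M * N - (lam * mu) • 1)) w
      = x • ((LinearMap.baseChange F (M + N - (lam + mu) • 1)) w) := by
  simp only [LinearMap.baseChange_sub, LinearMap.baseChange_mul, LinearMap.baseChange_add,
    LinearMap.baseChange_smul, LinearMap.baseChange_one]
  simp only [Module.End.mul_apply, LinearMap.sub_apply, LinearMap.add_apply,
    LinearMap.smul_apply, Module.End.one_apply, map_sub, map_smul] at hT ⊢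
  rw [← algebraMap_smul F (lam * mu) w, ← algebraMap_smul F (lam + mu) w,
    map_mul, map_add]
  linear_combination (norm := module) hT

theorem test_extract {ι : Type*} [Fintype ι] [DecidableEq ι] (b : Module.Basis ι K V)
    (A B : Module.End K V)
    (w : RatFunc K ⊗[K] V) (hw : w ≠ 0)
    (heq : (LinearMap.baseChange (RatFunc K) A) w =
      (RatFunc.X : RatFunc K) • ((LinearMap.baseChange (RatFunc K) B) w)) :
    ∃ v : ℕ → V,
      A (v 0) = 0 ∧ (∀ k, A (v (k+1)) = B (v k)) ∧
      (∃ d, ∀ k, d < k → v k = 0) ∧ (∃ k0, v k0 ≠ 0) := by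
  classical
  set f : ι → (RatFunc K) := fun i => (b.baseChange (RatFunc K)).repr w i with hf
  have hw_repr : w = ∑ i, f i • (b.baseChange (RatFunc K)) i := ((b.baseChange (RatFunc K)).sum_repr w).symm
  have coord : ∀ (T : Module.End K V) (j : ι),
      (b.baseChange (RatFunc K)).repr ((LinearMap.baseChange (RatFunc K) T) w) j
        = ∑ i, f i * algebraMap K (RatFunc K) (b.repr (T (b i)) j) := by
    intro T j
    conv_lhs => rw [hw_repr]
    rw [map_sum, map_sum]
    simp only [map_smul]
    rw [Finsupp.finset_sum_apply]
    refine Finset.sum_congr rfl fun i _ => ?_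
    simp only [Finsupp.smul_apply, smul_eq_mul]
    congr 1
    rw [Module.Basis.baseChange_apply, LinearMap.baseChange_tmul, Module.Basis.baseChange_repr_tmul,
      Algebra.smul_def, mul_one]
  have hcoordeq : ∀ j : ι,
      (∑ i, f i * algebraMap K (RatFunc K) (b.repr (A (b i)) j))
        = (RatFunc.X : RatFunc K) * ∑ i, f i * algebraMap K (RatFunc K) (b.repr (B (b i)) j) := by
    intro j
    rw [← coord A j, ← coord B j, heq, map_smul, Finsupp.smul_apply, smul_eq_mul]
  set q : Polynomial K := ∏ i, (f i).denom with hq_def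
  have hq : q ≠ 0 := Finset.prod_ne_zero_iff.mpr fun i _ => RatFunc.denom_ne_zero _
  have hp : ∀ i : ι, ∃ p : Polynomial K,
      algebraMap (Polynomial K) (RatFunc K) p = f i * algebraMap (Polynomial K) (RatFunc K) q := by
    intro i
    obtain ⟨r, hr⟩ := Finset.dvd_prod_of_mem (fun i => (f i).denom) (Finset.mem_univ i)
    rw [← hq_def] at hr
    have hd : (algebraMap (Polynomial K) (RatFunc K) ((f i).denom)) ≠ 0 :=
      RatFunc.algebraMap_ne_zero (RatFunc.denom_ne_zero _)
    refine ⟨(f i).num * r, ?_⟩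
    have key : algebraMap (Polynomial K) (RatFunc K) (f i).num
        = f i * algebraMap (Polynomial K) (RatFunc K) (f i).denom := by
      rw [← div_mul_cancel₀ (algebraMap (Polynomial K) (RatFunc K) (f i).num) hd,
        RatFunc.num_div_denom]
    rw [map_mul, key, hr, map_mul]
    ring
  choose p hp' using hp
  have polyid : ∀ j : ι,
      (∑ i, Polynomial.C (b.repr (A (b i)) j) * p i)
        = Polynomial.X * ∑ i, Polynomial.C (b.repr (B (b i)) j) * p i := by
    intro j
    apply IsFractionRing.injective (Polynomial K) (RatFunc K)
    rw [map_sum, map_mul, map_sum]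
    simp only [map_mul, hp', RatFunc.algebraMap_C, RatFunc.algebraMap_X]
    calc ∑ i, RatFunc.C ((b.repr (A (b i)) j)) * (f i * algebraMap (Polynomial K) (RatFunc K) q)
        = (∑ i, f i * algebraMap K (RatFunc K) (b.repr (A (b i)) j))
            * algebraMap (Polynomial K) (RatFunc K) q := by
          rw [Finset.sum_mul]
          refine Finset.sum_congr rfl fun i _ => ?_
          rw [← RatFunc.algebraMap_eq_C]
          ring
      _ = ((RatFunc.X : RatFunc K) * ∑ i, f i * algebraMap K (RatFunc K) (b.repr (B (b i)) j))
            * algebraMap (Polynomial K) (RatFunc K) q := by rw [hcoordeq j]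
      _ = _ := by
          rw [Finset.mul_sum, Finset.mul_sum, Finset.sum_mul]
          refine Finset.sum_congr rfl fun i _ => ?_
          rw [← RatFunc.algebraMap_eq_C]
          ring
  have hrT : ∀ (T : Module.End K V) (k : ℕ) (j : ι),
      b.repr (T (∑ i, (p i).coeff k • b i)) j = ∑ i, b.repr (T (b i)) j * (p i).coeff k := by
    intro T k j
    rw [map_sum, map_sum, Finsupp.finset_sum_apply]
    refine Finset.sum_congr rfl fun i _ => ?_
    rw [map_smul, map_smul, Finsupp.smul_apply, smul_eq_mul, mul_comm]
  have hcoeff : ∀ (T : Module.End K V) (k : ℕ) (j : ι),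
      (∑ i, Polynomial.C (b.repr (T (b i)) j) * p i).coeff k
        = ∑ i, b.repr (T (b i)) j * (p i).coeff k := by
    intro T k j
    rw [Polynomial.finset_sum_coeff]
    exact Finset.sum_congr rfl fun i _ => Polynomial.coeff_C_mul _
  refine ⟨fun k => ∑ i, (p i).coeff k • b i, ?_, ?_, ?_, ?_⟩
  · apply b.ext_elem
    intro j
    rw [hrT, map_zero, Finsupp.coe_zero, Pi.zero_apply, ← hcoeff, polyid j,
      Polynomial.coeff_X_mul_zero]
  · intro k
    apply b.ext_elem
    intro j
    rw [hrT, hrT, ← hcoeff, ← hcoeff, polyid j, Polynomial.coeff_X_mul]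
  · refine ⟨Finset.univ.sup (fun i => (p i).natDegree), fun k hk => ?_⟩
    refine Finset.sum_eq_zero fun i _ => ?_
    rw [Polynomial.coeff_eq_zero_of_natDegree_lt
      (lt_of_le_of_lt (Finset.le_sup (f := fun i => (p i).natDegree) (Finset.mem_univ i)) hk),
      zero_smul]
  · have hfi : ∃ i, f i ≠ 0 := by
      by_contra h
      push_neg at h
      apply hw
      rw [hw_repr]
      exact Finset.sum_eq_zero fun i _ => by rw [h i, zero_smul]
    obtain ⟨i, hfi⟩ := hfi
    have hpi : p i ≠ 0 := by
      intro h0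
      apply hfi
      have := hp' i
      rw [h0, map_zero] at this
      exact (mul_eq_zero.mp this.symm).resolve_right (RatFunc.algebraMap_ne_zero hq)
    obtain ⟨k, hk⟩ : ∃ k, (p i).coeff k ≠ 0 := by
      by_contra h
      push_neg at h
      exact hpi (Polynomial.ext h)
    refine ⟨k, fun h0 => hk ?_⟩
    have h1 := b.repr_sum_self (c := fun i => (p i).coeff k)
    calc (p i).coeff k = b.repr (∑ i, (p i).coeff k • b i) i := (congrFun h1 i).symm
      _ = b.repr (0 : V) i := by rw [show ∑ i : ι, (p i).coeff k • b i = 0 from h0]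
      _ = 0 := by simp

end Aux

theorem stmt_17 {K V : Type*} [Field K] [AddCommGroup V] [Module K V]
    [FiniteDimensional K V]
    (M N : Module.End K V) (hcomm : M * N = N * M) (lam mu : K) :
    Module.End.HasEigenvalue
      ((LinearMap.baseChange (RatFunc K) M - (RatFunc.X : RatFunc K) • 1) *
        (LinearMap.baseChange (RatFunc K) N - (RatFunc.X : RatFunc K) • 1))
      ((algebraMap K (RatFunc K) lam - RatFunc.X) *
       (algebraMap K (RatFunc K) mu - RatFunc.X)) ↔
    (LinearMap.ker (M - lam • 1) ⊓ LinearMap.ker (N - mu • 1)) ⊔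
      (LinearMap.ker (M - mu • 1) ⊓ LinearMap.ker (N - lam • 1)) ≠ ⊥ := by
  constructor
  · intro h
    obtain ⟨x, hx⟩ := h.exists_hasEigenvector
    have hx1 := Module.End.mem_eigenspace_iff.mp hx.1
    have heq := fwd_key M N lam mu (RatFunc.X : RatFunc K) x hx1
    obtain ⟨v, h0, hs, ⟨d, hd⟩, ⟨k0, hk0⟩⟩ :=
      test_extract (Module.finBasis K V) _ _ x hx.2 heq
    have c1 : Commute M N := hcomm
    have commAB : Commute (M * N - (lam * mu) • 1) (M + N - (lam + mu) • 1) := by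
      have cM : Commute (M * N) M := Commute.mul_left (Commute.refl M) c1.symm
      have cN : Commute (M * N) N := Commute.mul_left c1 (Commute.refl N)
      have cs1 : Commute (M * N) ((lam + mu) • (1 : Module.End K V)) :=
        (Commute.one_right _).smul_right _
      have csl : Commute ((lam * mu) • (1 : Module.End K V)) (M + N - (lam + mu) • 1) :=
        (((Commute.one_left M).add_right (Commute.one_left N)).sub_right
          ((Commute.one_left _).smul_right _)).smul_left _
      exact ((cM.add_right cN).sub_right cs1).sub_left csl
    obtain ⟨u, hu, hAu, hBu⟩ := test_chain _ _ commAB v h0 hs d hd k0 hk0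
    exact test_ker_sup M N hcomm lam mu u hu hAu hBu
  · intro hne
    obtain ⟨u, hmem, hu⟩ := (Submodule.ne_bot_iff _).mp hne
    obtain ⟨y, hy, z, hz, rfl⟩ := Submodule.mem_sup.mp hmem
    obtain ⟨hy1, hy2⟩ := Submodule.mem_inf.mp hy
    obtain ⟨hz1, hz2⟩ := Submodule.mem_inf.mp hz
    have hev : ∀ (T : Module.End K V) (c : K) (v : V),
        v ∈ LinearMap.ker (T - c • 1) → T v = c • v := by
      intro T c v hv
      have := LinearMap.mem_ker.mp hv
      simp only [LinearMap.sub_apply, LinearMap.smul_apply, Module.End.one_apply,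
        sub_eq_zero] at this
      exact this
    have hMy := hev M lam y hy1
    have hNy := hev N mu y hy2
    have hMz := hev M mu z hz1
    have hNz := hev N lam z hz2
    have hinj : ∀ v : V, (1 : RatFunc K) ⊗ₜ[K] v = 0 → v = 0 := by
      intro v hv
      set b := Module.finBasis K V
      apply b.ext_elem
      intro i
      have h2 := congrArg (fun t => (b.baseChange (RatFunc K)).repr t i) hv
      simp only [Module.Basis.baseChange_repr_tmul, map_zero, Finsupp.coe_zero,
        Pi.zero_apply] at h2
      rw [Algebra.smul_def, mul_one] at h2
      have h3 := (algebraMap K (RatFunc K)).injective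
        (h2.trans (map_zero (algebraMap K (RatFunc K))).symm)
      simpa using h3
    have hw0 : (1 : RatFunc K) ⊗ₜ[K] (y + z) ≠ 0 := fun h => hu (hinj _ h)
    apply Module.End.hasEigenvalue_of_hasEigenvector
      (x := (1 : RatFunc K) ⊗ₜ[K] (y + z))
    refine ⟨Module.End.mem_eigenspace_iff.mpr ?_, hw0⟩
    rw [TensorProduct.tmul_add, map_add,
      bk_key M N y lam mu (RatFunc.X : RatFunc K) hMy hNy,
      bk_key M N z mu lam (RatFunc.X : RatFunc K) hMz hNz, smul_add,
      mul_comm (algebraMap K (RatFunc K) mu - RatFunc.X)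
        (algebraMap K (RatFunc K) lam - RatFunc.X)]
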